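/- A d-dimensional affine subspace of ℝ^n intersects at most ∑_{i=0}^{d} C(n,i) open orthants of ℝ^n, and this bound is attained by a generic affine subspace. -/

import Mathlib

open Finset Polynomial

private def pat {n : ℕ} (s : AffineSubspace ℝ (Fin n → ℝ)) : Set (Fin n → Bool) :=
  {σ | ∃ x ∈ s, ∀ j, (σ j = true → 0 < x j) ∧ (σ j = false → x j < 0)}

private lemma sum_choose_zero (d : ℕ) : ∑ i ∈ Finset.range (d+1), Nat.choose 0 i = 1 := by
  induction d with
  | zero => simp
  | succ d ih => rw [Finset.sum_range_succ, ih, Nat.choose_eq_zero_of_lt (by omega)]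

private lemma sum_choose_succ (n d : ℕ) :
    ∑ i ∈ Finset.range (d+1), (n+1).choose i
      = ∑ i ∈ Finset.range (d+1), n.choose i + ∑ i ∈ Finset.range d, n.choose i := by
  induction d with
  | zero => simp
  | succ d ih =>
      rw [Finset.sum_range_succ, ih, Nat.choose_succ_succ,
        Finset.sum_range_succ (f := fun i => n.choose i) (d+1),
        Finset.sum_range_succ (f := fun i => n.choose i) d]
      simp only [Nat.succ_eq_add_one]
      omega

set_option maxHeartbeats 1000000 in
private lemma pat_upper : ∀ n d (s : AffineSubspace ℝ (Fin n → ℝ)),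
    Module.finrank ℝ s.direction ≤ d →
    (pat s).ncard ≤ ∑ i ∈ Finset.range (d + 1), n.choose i := by
  intro n
  induction n with
  | zero =>
      intro d s _
      calc (pat s).ncard ≤ (Set.univ : Set (Fin 0 → Bool)).ncard :=
            Set.ncard_le_ncard (Set.subset_univ _) Set.finite_univ
        _ = 1 := by rw [Set.ncard_univ]; simp [Nat.card_eq_fintype_card]
        _ ≤ _ := le_of_eq (sum_choose_zero d).symm
  | succ n IH =>
      intro d s hs
      classical
      set π : (Fin (n+1) → ℝ) →ₗ[ℝ] (Fin n → ℝ) := LinearMap.funLeft ℝ ℝ Fin.castSucc with hπ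
      set L : (Fin (n+1) → ℝ) →ₗ[ℝ] ℝ := LinearMap.proj (Fin.last n) with hL
      set K : AffineSubspace ℝ (Fin (n+1) → ℝ) := AffineSubspace.mk' 0 (LinearMap.ker L) with hK
      set s' := s.map π.toAffineMap with hs'
      set t := s ⊓ K with ht
      set t' := t.map π.toAffineMap with ht'
      set r : (Fin (n+1) → Bool) → (Fin n → Bool) := fun σ => σ ∘ Fin.castSucc with hr
      set P := pat s with hP
      set Pp := {σ ∈ P | σ (Fin.last n) = true} with hPp
      set Pm := {σ ∈ P | σ (Fin.last n) = false} with hPm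
      -- claim 1
      have claim1 : r '' Pp ∪ r '' Pm ⊆ pat s' := by
        rintro σ' (⟨σ, ⟨⟨x, hxs, hx⟩, -⟩, rfl⟩ | ⟨σ, ⟨⟨x, hxs, hx⟩, -⟩, rfl⟩) <;>
          exact ⟨π x, AffineSubspace.mem_map.mpr ⟨x, hxs, rfl⟩, fun j => hx j.castSucc⟩
      -- doubled data
      have doubled : ∀ σ' ∈ r '' Pp ∩ r '' Pm, ∃ x ∈ s, ∃ y ∈ s,
          0 < x (Fin.last n) ∧ y (Fin.last n) < 0 ∧
          (∀ j : Fin n, (σ' j = true → (0 < x j.castSucc ∧ 0 < y j.castSucc)) ∧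
            (σ' j = false → (x j.castSucc < 0 ∧ y j.castSucc < 0))) := by
        rintro σ' ⟨⟨σp, ⟨⟨x, hxs, hx⟩, hplast⟩, rfl⟩, ⟨σm, ⟨⟨y, hys, hy⟩, hmlast⟩, hrm⟩⟩
        refine ⟨x, hxs, y, hys, (hx (Fin.last n)).1 hplast, (hy (Fin.last n)).2 hmlast, ?_⟩
        intro j
        have hj : σm j.castSucc = σp j.castSucc := congrFun hrm j
        constructor
        · intro h
          exact ⟨(hx j.castSucc).1 h, (hy j.castSucc).1 (by rw [hj]; exact h)⟩
        · intro h
          exact ⟨(hx j.castSucc).2 h, (hy j.castSucc).2 (by rw [hj]; exact h)⟩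
      have claim2 : r '' Pp ∩ r '' Pm ⊆ pat t' := by
        intro σ' hσ'
        obtain ⟨x, hxs, y, hys, hxl, hyl, hsigns⟩ := doubled σ' hσ'
        have hne : x (Fin.last n) - y (Fin.last n) ≠ 0 := by linarith
        set θ : ℝ := x (Fin.last n) / (x (Fin.last n) - y (Fin.last n)) with hθ
        have hθ0 : 0 < θ := div_pos hxl (by linarith)
        have hθ1 : θ < 1 := by
          rw [hθ, div_lt_one (by linarith)]; linarith
        set z := AffineMap.lineMap x y θ with hz
        have hzs : z ∈ s := AffineMap.lineMap_mem θ hxs hys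
        have hzap : ∀ j, z j = (1 - θ) * x j + θ * y j := by
          intro j
          rw [hz, AffineMap.lineMap_apply_module]
          simp [smul_eq_mul]
        have hzlast : z (Fin.last n) = 0 := by
          rw [hzap, hθ]; field_simp; ring
        have hzK : z ∈ K := by
          rw [hK, AffineSubspace.mem_mk']
          simp only [vsub_eq_sub, sub_zero, LinearMap.mem_ker]
          simpa [hL] using hzlast
        refine ⟨π z, AffineSubspace.mem_map.mpr ⟨z, ⟨hzs, hzK⟩, rfl⟩, ?_⟩
        intro j
        constructor
        · intro h
          obtain ⟨h1, h2⟩ := (hsigns j).1 h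
          have h3 : (0:ℝ) < (1 - θ) * x j.castSucc + θ * y j.castSucc :=
            add_pos (mul_pos (by linarith) h1) (mul_pos hθ0 h2)
          have h4 : (π z) j = z j.castSucc := rfl
          rw [h4, hzap]; exact h3
        · intro h
          obtain ⟨h1, h2⟩ := (hsigns j).2 h
          have h3 : (1 - θ) * x j.castSucc + θ * y j.castSucc < 0 := by nlinarith
          have h4 : (π z) j = z j.castSucc := rfl
          rw [h4, hzap]; exact h3
      -- counting
      have hPsplit : P = Pp ∪ Pm := by
        ext σ
        simp only [hPp, hPm, Set.mem_union, Set.mem_setOf_eq, Set.mem_sep_iff]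
        cases h : σ (Fin.last n) <;> tauto
      have hPdisj : Disjoint Pp Pm := by
        rw [Set.disjoint_left]
        rintro σ ⟨-, h1⟩ ⟨-, h2⟩
        rw [h1] at h2; exact Bool.noConfusion h2
      have hinj : ∀ (Q : Set (Fin (n+1) → Bool)) (b : Bool),
          (∀ σ ∈ Q, σ (Fin.last n) = b) → Set.InjOn r Q := by
        intro Q b hQ σ hσ τ hτ hrστ
        funext j
        induction j using Fin.lastCases with
        | last => rw [hQ σ hσ, hQ τ hτ]
        | cast j => exact congrFun hrστ j
      have hcount : P.ncard = (r '' Pp ∪ r '' Pm).ncard + (r '' Pp ∩ r '' Pm).ncard := by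
        rw [Set.ncard_union_add_ncard_inter _ _ (Set.toFinite _) (Set.toFinite _),
          Set.ncard_image_of_injOn (hinj Pp true (fun σ hσ => hσ.2)),
          Set.ncard_image_of_injOn (hinj Pm false (fun σ hσ => hσ.2)),
          hPsplit, Set.ncard_union_eq hPdisj (Set.toFinite _) (Set.toFinite _)]
      have hds' : Module.finrank ℝ s'.direction ≤ d := by
        rw [hs', AffineSubspace.map_direction]
        exact le_trans (Submodule.finrank_map_le _ _) hs
      have h1 : (r '' Pp ∪ r '' Pm).ncard ≤ ∑ i ∈ Finset.range (d+1), n.choose i :=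
        le_trans (Set.ncard_le_ncard claim1 (Set.toFinite _)) (IH d s' hds')
      have h2 : (r '' Pp ∩ r '' Pm).ncard ≤ ∑ i ∈ Finset.range d, n.choose i := by
        rcases Set.eq_empty_or_nonempty (r '' Pp ∩ r '' Pm) with he | ⟨σ', hσ'⟩
        · rw [he, Set.ncard_empty]; exact Nat.zero_le _
        · obtain ⟨x, hxs, y, hys, hxl, hyl, -⟩ := doubled σ' hσ'
          have hv : y -ᵥ x ∈ s.direction := AffineSubspace.vsub_mem_direction hys hxs
          have hvl : (y -ᵥ x) (Fin.last n) ≠ 0 := by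
            simp only [vsub_eq_sub, Pi.sub_apply]; linarith
          have hlt : s.direction ⊓ LinearMap.ker L < s.direction := by
            refine lt_of_le_of_ne inf_le_left (fun hEq => hvl ?_)
            have : y -ᵥ x ∈ s.direction ⊓ LinearMap.ker L := hEq.symm ▸ hv
            simpa [hL] using this.2
          have htd : t.direction ≤ s.direction ⊓ LinearMap.ker L := by
            refine le_trans (AffineSubspace.direction_inf s K) ?_
            rw [hK, AffineSubspace.direction_mk']
          have hrank : Module.finrank ℝ t.direction < d := by
            calc Module.finrank ℝ t.direction
                ≤ Module.finrank ℝ (s.direction ⊓ LinearMap.ker L : Submodule ℝ _) :=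
                  Submodule.finrank_mono htd
              _ < Module.finrank ℝ s.direction := Submodule.finrank_lt_finrank_of_lt hlt
              _ ≤ d := hs
          have hd1 : 1 ≤ d := by omega
          have htd' : Module.finrank ℝ t'.direction ≤ d - 1 := by
            rw [ht', AffineSubspace.map_direction]
            exact le_trans (Submodule.finrank_map_le _ _) (by omega)
          have := le_trans (Set.ncard_le_ncard claim2 (Set.toFinite _)) (IH (d-1) t' htd')
          have hdd : d - 1 + 1 = d := by omega
          rwa [hdd] at this
      rw [sum_choose_succ]
      omega

private lemma prod_neg_sign (f : ℕ → ℝ) :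
    ∀ s : Finset ℕ, (∀ i ∈ s, f i < 0) →
      (Even s.card → 0 < ∏ i ∈ s, f i) ∧ (¬Even s.card → ∏ i ∈ s, f i < 0) := by
  classical
  intro s
  induction s using Finset.induction_on with
  | empty => intro _; simp
  | @insert a s ha ih =>
      intro h
      have hfa : f a < 0 := h a (Finset.mem_insert_self _ _)
      obtain ⟨ih1, ih2⟩ := ih (fun i hi => h i (Finset.mem_insert_of_mem hi))
      rw [Finset.prod_insert ha, Finset.card_insert_of_notMem ha, Nat.even_add_one]
      constructor
      · intro hev
        exact mul_pos_of_neg_of_neg hfa (ih2 hev)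
      · intro hev
        push_neg at hev
        exact mul_neg_of_neg_of_pos hfa (ih1 hev)

private def chg (C : Finset ℕ) (j : ℕ) : ℕ := (C.filter fun i => j ≤ i).card

private def Phi {n : ℕ} (C : Finset ℕ) (b : Bool) : Fin n → Bool :=
  fun j => b == decide (Even (chg C (j : ℕ)))

private lemma chg_step (C : Finset ℕ) (m : ℕ) :
    chg C m = chg C (m + 1) + (if m ∈ C then 1 else 0) := by
  classical
  unfold chg
  have hsplit : C.filter (fun i => m ≤ i)
      = C.filter (fun i => m + 1 ≤ i) ∪ C.filter (fun i => i = m) := by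
    ext i
    simp only [Finset.mem_filter, Finset.mem_union]
    by_cases hiC : i ∈ C <;> simp [hiC] <;> omega
  have hdisj : Disjoint (C.filter (fun i => m + 1 ≤ i)) (C.filter (fun i => i = m)) := by
    rw [Finset.disjoint_left]
    intro i hi1 hi2
    simp only [Finset.mem_filter] at hi1 hi2
    omega
  rw [hsplit, Finset.card_union_of_disjoint hdisj, Finset.filter_eq' C m]
  split_ifs with h <;> simp

private lemma chg_last {n : ℕ} (C : Finset ℕ) (hC : C ⊆ Finset.range (n - 1)) :
    chg C (n - 1) = 0 := by
  unfold chg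
  rw [Finset.card_eq_zero, Finset.filter_eq_empty_iff]
  intro i hi
  have := Finset.mem_range.mp (hC hi)
  omega

private lemma Phi_change {n : ℕ} (C : Finset ℕ) (b : Bool) (m : ℕ) (hm : m + 1 < n) :
    (Phi (n := n) C b ⟨m, by omega⟩ ≠ Phi C b ⟨m + 1, hm⟩) ↔ m ∈ C := by
  have hstep := chg_step C m
  have key : ((b == decide (Even (chg C m))) = (b == decide (Even (chg C (m + 1)))))
      ↔ (Even (chg C m) ↔ Even (chg C (m + 1))) := by
    cases b <;> simp [decide_eq_decide]
  unfold Phi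
  rw [ne_eq, key]
  by_cases hmC : m ∈ C
  · simp only [hmC, if_true] at hstep
    simp only [hmC, iff_true, Nat.even_iff] at *
    omega
  · simp only [hmC, if_pos, if_neg, add_zero] at hstep
    simp [hmC, hstep]

private lemma vmon_li (n d : ℕ) (hdn : d ≤ n) :
    LinearIndependent ℝ (fun k : Fin d => fun j : Fin n => ((j : ℕ) : ℝ) ^ (k : ℕ)) := by
  rcases Nat.eq_zero_or_pos d with rfl | hd
  · exact linearIndependent_empty_type
  rw [Fintype.linearIndependent_iff]
  intro g hg
  set p : ℝ[X] := ∑ k : Fin d, Polynomial.C (g k) * X ^ (k : ℕ) with hp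
  have hdeg : p.natDegree < n := by
    have h1 : p.natDegree ≤ d - 1 := by
      refine Polynomial.natDegree_sum_le_of_forall_le _ _ (fun k _ => ?_)
      refine le_trans (Polynomial.natDegree_C_mul_le _ _) ?_
      rw [Polynomial.natDegree_X_pow]
      omega
    omega
  have heval : ∀ j : Fin n, p.eval ((j : ℕ) : ℝ) = 0 := by
    intro j
    have h1 := congrFun hg j
    simp only [Finset.sum_apply, Pi.smul_apply, smul_eq_mul, Pi.zero_apply] at h1
    rw [hp]
    simp only [Polynomial.eval_finset_sum, Polynomial.eval_mul, Polynomial.eval_C,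
      Polynomial.eval_pow, Polynomial.eval_X]
    exact h1
  have hinj : Function.Injective (fun j : Fin n => ((j : ℕ) : ℝ)) := by
    intro a c hac
    exact Fin.val_injective (Nat.cast_injective hac)
  have hp0 : p = 0 :=
    Polynomial.eq_zero_of_natDegree_lt_card_of_eval_eq_zero p hinj heval (by simpa using hdeg)
  intro k
  have hcoeff : p.coeff (k : ℕ) = g k := by
    rw [hp, Polynomial.finset_sum_coeff]
    rw [Finset.sum_eq_single k]
    · simp [Polynomial.coeff_C_mul, Polynomial.coeff_X_pow]
    · intro m _ hmk
      simp only [Polynomial.coeff_C_mul, Polynomial.coeff_X_pow]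
      rw [if_neg (fun h => hmk (Fin.val_injective h.symm))]
      simp
    · intro h
      exact absurd (Finset.mem_univ k) h
  rw [← hcoeff, hp0]
  simp

private lemma mem_poly (n d : ℕ) (p : ℝ[X]) (hmonic : p.Monic) (hdeg : p.natDegree = d) :
    (fun j : Fin n => p.eval ((j : ℕ) : ℝ)) ∈ AffineSubspace.mk'
      (fun j : Fin n => ((j : ℕ) : ℝ) ^ d)
      (Submodule.span ℝ (Set.range (fun k : Fin d => fun j : Fin n => ((j : ℕ) : ℝ) ^ (k : ℕ)))) := by
  rw [AffineSubspace.mem_mk']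
  set q : ℝ[X] := p - X ^ d with hq
  have hfun : (fun j : Fin n => p.eval ((j : ℕ) : ℝ)) -ᵥ (fun j : Fin n => ((j : ℕ) : ℝ) ^ d)
      = fun j : Fin n => q.eval ((j : ℕ) : ℝ) := by
    funext j
    simp [hq, vsub_eq_sub, Polynomial.eval_sub, Polynomial.eval_pow]
  rw [hfun]
  by_cases hq0 : q = 0
  · rw [hq0]
    simp only [Polynomial.eval_zero]
    exact Submodule.zero_mem _
  · have h1 : p.degree = ((d : ℕ) : WithBot ℕ) := by
      rw [Polynomial.degree_eq_natDegree hmonic.ne_zero, hdeg]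
    have h2 : q.degree < ((d : ℕ) : WithBot ℕ) := by
      rw [← h1]
      refine Polynomial.degree_sub_lt (by rw [h1, Polynomial.degree_X_pow]) hmonic.ne_zero ?_
      rw [hmonic.leadingCoeff, (Polynomial.monic_X_pow d).leadingCoeff]
    have hnat : q.natDegree < d := (Polynomial.natDegree_lt_iff_degree_lt hq0).mpr h2
    rw [Submodule.mem_span_range_iff_exists_fun]
    refine ⟨fun k : Fin d => q.coeff (k : ℕ), ?_⟩
    funext j
    rw [Finset.sum_apply]
    simp only [Pi.smul_apply, smul_eq_mul]
    rw [Fin.sum_univ_eq_sum_range (fun k => q.coeff k * ((j : ℕ) : ℝ) ^ k) d]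
    exact (Polynomial.eval_eq_sum_range' hnat _).symm

private lemma realize (n d : ℕ) (C : Finset ℕ) (b : Bool) (hCd : C.card ≤ d)
    (hbd : C.card = d → b = true) :
    ∃ x ∈ AffineSubspace.mk' (fun j : Fin n => ((j : ℕ) : ℝ) ^ d)
      (Submodule.span ℝ (Set.range (fun k : Fin d => fun j : Fin n => ((j : ℕ) : ℝ) ^ (k : ℕ)))),
      ∀ j : Fin n, (Phi C b j = true → 0 < x j) ∧ (Phi C b j = false → x j < 0) := by
  classical
  set f : ℕ := if b then 0 else 1 with hf
  have hcf : C.card + f ≤ d := by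
    cases b with
    | false =>
        have hne : C.card ≠ d := fun h => by simpa using hbd h
        have hf1 : f = 1 := by simp [hf]
        omega
    | true =>
        have hf0 : f = 0 := by simp [hf]
        omega
  set e : ℕ := d - C.card - f with he
  set p : ℝ[X] := (∏ i ∈ C, (X - Polynomial.C ((i : ℝ) + 2⁻¹)))
      * (X + Polynomial.C 1) ^ e * (X - Polynomial.C (n : ℝ)) ^ f with hp
  have hmono : p.Monic :=
    ((Polynomial.monic_prod_of_monic _ _ (fun i _ => Polynomial.monic_X_sub_C _)).mul
      ((Polynomial.monic_X_add_C _).pow e)).mul ((Polynomial.monic_X_sub_C _).pow f)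
  have hdeg : p.natDegree = d := by
    rw [hp]
    rw [Polynomial.Monic.natDegree_mul
      ((Polynomial.monic_prod_of_monic _ _ (fun i _ => Polynomial.monic_X_sub_C _)).mul
        ((Polynomial.monic_X_add_C _).pow e)) ((Polynomial.monic_X_sub_C _).pow f)]
    rw [Polynomial.Monic.natDegree_mul
      (Polynomial.monic_prod_of_monic _ _ (fun i _ => Polynomial.monic_X_sub_C _))
      ((Polynomial.monic_X_add_C _).pow e)]
    rw [Polynomial.natDegree_prod _ _ (fun i _ => Polynomial.X_sub_C_ne_zero _)]
    simp only [Polynomial.natDegree_X_sub_C, Polynomial.natDegree_pow,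
      Polynomial.natDegree_X_add_C, Finset.sum_const, smul_eq_mul, mul_one]
    omega
  refine ⟨fun j : Fin n => p.eval ((j : ℕ) : ℝ), mem_poly n d p hmono hdeg, ?_⟩
  intro j
  show (Phi C b j = true → 0 < p.eval ((j : ℕ) : ℝ)) ∧
    (Phi C b j = false → p.eval ((j : ℕ) : ℝ) < 0)
  -- value decomposition
  set P1 : ℝ := ∏ i ∈ C.filter (fun i => (j : ℕ) ≤ i), (((j : ℕ) : ℝ) - ((i : ℝ) + 2⁻¹)) with hP1
  set P2 : ℝ := ∏ i ∈ C.filter (fun i => ¬ (j : ℕ) ≤ i), (((j : ℕ) : ℝ) - ((i : ℝ) + 2⁻¹)) with hP2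
  set B : ℝ := (((j : ℕ) : ℝ) + 1) ^ e with hB
  set Df : ℝ := (((j : ℕ) : ℝ) - (n : ℝ)) ^ f with hDf
  have hval : p.eval ((j : ℕ) : ℝ) = P1 * (P2 * B * Df) := by
    rw [hp]
    simp only [Polynomial.eval_mul, Polynomial.eval_pow, Polynomial.eval_prod,
      Polynomial.eval_sub, Polynomial.eval_add, Polynomial.eval_X, Polynomial.eval_C]
    rw [← Finset.prod_filter_mul_prod_filter_not C (fun i => (j : ℕ) ≤ i)]
    rw [hP1, hP2, hB, hDf]
    ring
  have hP2pos : 0 < P2 := by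
    rw [hP2]
    refine Finset.prod_pos (fun i hi => ?_)
    obtain ⟨hiC, hij⟩ := Finset.mem_filter.mp hi
    push_neg at hij
    have : ((i : ℕ) : ℝ) + 1 ≤ ((j : ℕ) : ℝ) := by exact_mod_cast hij
    have h2 : (2⁻¹ : ℝ) < 1 := by norm_num
    linarith
  have hBpos : 0 < B := by
    rw [hB]
    positivity
  have hP1sign := prod_neg_sign (fun i => (((j : ℕ) : ℝ) - ((i : ℝ) + 2⁻¹)))
    (C.filter (fun i => (j : ℕ) ≤ i))
    (by
      intro i hi
      obtain ⟨hiC, hij⟩ := Finset.mem_filter.mp hi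
      have : ((j : ℕ) : ℝ) ≤ ((i : ℕ) : ℝ) := by exact_mod_cast hij
      have h2 : (0:ℝ) < 2⁻¹ := by norm_num
      linarith)
  have hchg : chg C (j : ℕ) = (C.filter (fun i => (j : ℕ) ≤ i)).card := rfl
  cases b with
  | true =>
      have hDf1 : Df = 1 := by rw [hDf]; simp [hf]
      have hrest : 0 < P2 * B * Df := by
        rw [hDf1, mul_one]; exact mul_pos hP2pos hBpos
      by_cases hev : Even (chg C (j : ℕ))
      · have hPhi : Phi C true j = true := by simp [Phi, hev]
        have hpos : 0 < P1 := hP1sign.1 (by rwa [← hchg])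
        constructor
        · intro _
          rw [hval]
          exact mul_pos hpos hrest
        · intro h
          rw [hPhi] at h
          exact absurd h (by simp)
      · have hPhi : Phi C true j = false := by simp [Phi, hev]
        have hneg : P1 < 0 := hP1sign.2 (by rwa [← hchg])
        constructor
        · intro h
          rw [hPhi] at h
          exact absurd h (by simp)
        · intro _
          rw [hval]
          exact mul_neg_of_neg_of_pos hneg hrest
  | false =>
      have hjn : ((j : ℕ) : ℝ) - (n : ℝ) < 0 := by
        have : (j : ℕ) < n := j.isLt
        have := (Nat.cast_lt (α := ℝ)).mpr this
        linarith
      have hDfneg : Df < 0 := by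
        rw [hDf]
        simp only [hf, if_neg Bool.false_ne_true, pow_one]
        exact hjn
      have hrest : P2 * B * Df < 0 := mul_neg_of_pos_of_neg (mul_pos hP2pos hBpos) hDfneg
      by_cases hev : Even (chg C (j : ℕ))
      · have hPhi : Phi C false j = false := by simp [Phi, hev]
        have hpos : 0 < P1 := hP1sign.1 (by rwa [← hchg])
        constructor
        · intro h
          rw [hPhi] at h
          exact absurd h (by simp)
        · intro _
          rw [hval]
          exact mul_neg_of_pos_of_neg hpos hrest
      · have hPhi : Phi C false j = true := by simp [Phi, hev]
        have hneg : P1 < 0 := hP1sign.2 (by rwa [← hchg])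
        constructor
        · intro _
          rw [hval]
          exact mul_pos_of_neg_of_neg hneg hrest
        · intro h
          rw [hPhi] at h
          exact absurd h (by simp)


private lemma Tcard (n d : ℕ) (hn : 1 ≤ n) :
    ((((Finset.range d).biUnion fun k => Finset.powersetCard k (Finset.range (n-1)))
        ×ˢ ({true, false} : Finset Bool)
      ∪ (Finset.powersetCard d (Finset.range (n-1))) ×ˢ ({true} : Finset Bool)).card)
      = ∑ i ∈ Finset.range (d+1), n.choose i := by
  classical
  have hdisj : Disjoint
      (((Finset.range d).biUnion fun k => Finset.powersetCard k (Finset.range (n-1)))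
        ×ˢ ({true, false} : Finset Bool))
      ((Finset.powersetCard d (Finset.range (n-1))) ×ˢ ({true} : Finset Bool)) := by
    rw [Finset.disjoint_left]
    rintro ⟨C, b⟩ h1 h2
    rw [Finset.mem_product] at h1 h2
    obtain ⟨h1a, -⟩ := h1
    obtain ⟨h2a, -⟩ := h2
    obtain ⟨k, hk, hCk⟩ := Finset.mem_biUnion.mp h1a
    rw [Finset.mem_powersetCard] at hCk h2a
    rw [Finset.mem_range] at hk
    omega
  rw [Finset.card_union_of_disjoint hdisj, Finset.card_product, Finset.card_product]
  have hbi : (((Finset.range d).biUnion fun k =>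
      Finset.powersetCard k (Finset.range (n-1)))).card
      = ∑ k ∈ Finset.range d, (n-1).choose k := by
    rw [Finset.card_biUnion]
    · refine Finset.sum_congr rfl (fun k _ => ?_)
      rw [Finset.card_powersetCard, Finset.card_range]
    · intro k hk k' hk' hkk'
      rw [Function.onFun, Finset.disjoint_left]
      intro C hC hC'
      rw [Finset.mem_powersetCard] at hC hC'
      exact hkk' (by omega)
  rw [hbi, Finset.card_powersetCard, Finset.card_range]
  have hb2 : ({true, false} : Finset Bool).card = 2 := by decide
  have hb1 : ({true} : Finset Bool).card = 1 := by decide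
  rw [hb2, hb1]
  have hkey : ∑ i ∈ Finset.range (d+1), n.choose i
      = (∑ i ∈ Finset.range (d+1), (n-1).choose i) + ∑ i ∈ Finset.range d, (n-1).choose i := by
    have h0 := sum_choose_succ (n-1) d
    have h1 : n - 1 + 1 = n := by omega
    rwa [h1] at h0
  have hsplit : ∑ i ∈ Finset.range (d+1), (n-1).choose i
      = (∑ i ∈ Finset.range d, (n-1).choose i) + (n-1).choose d := Finset.sum_range_succ _ _
  omega

/-- A `d`-dimensional affine subspace of `ℝ^n` intersects at most `∑_{i=0}^d C(n,i)` open
orthants, and this bound is attained (by a generic affine subspace). -/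
theorem affine_subspace_orthant_count
    (n d : ℕ) (hdn : d ≤ n) :
    (∀ s : AffineSubspace ℝ (Fin n → ℝ), (s : Set (Fin n → ℝ)).Nonempty →
      Module.finrank ℝ s.direction = d →
      {σ : Fin n → Bool | ∃ x ∈ s, ∀ j, (σ j = true → 0 < x j) ∧
        (σ j = false → x j < 0)}.ncard ≤ ∑ i ∈ Finset.range (d + 1), n.choose i) ∧
    (∃ s : AffineSubspace ℝ (Fin n → ℝ), (s : Set (Fin n → ℝ)).Nonempty ∧
      Module.finrank ℝ s.direction = d ∧
      {σ : Fin n → Bool | ∃ x ∈ s, ∀ j, (σ j = true → 0 < x j) ∧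
        (σ j = false → x j < 0)}.ncard = ∑ i ∈ Finset.range (d + 1), n.choose i) := by
  constructor
  · intro s _ hrank
    exact pat_upper n d s (le_of_eq hrank)
  · rcases Nat.eq_zero_or_pos n with rfl | hn
    · have hd0 : d = 0 := by omega
      subst hd0
      refine ⟨⊤, ⟨0, trivial⟩, ?_, ?_⟩
      · rw [AffineSubspace.direction_top]
        simp
      · have hset : {σ : Fin 0 → Bool | ∃ x ∈ (⊤ : AffineSubspace ℝ (Fin 0 → ℝ)),
            ∀ j, (σ j = true → 0 < x j) ∧ (σ j = false → x j < 0)} = Set.univ := by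
          ext σ
          simp only [Set.mem_setOf_eq, Set.mem_univ, iff_true]
          exact ⟨0, trivial, fun j => j.elim0⟩
        rw [hset, Set.ncard_univ]
        simp [Nat.card_eq_fintype_card]
    · have hrank : Module.finrank ℝ (AffineSubspace.mk' (fun j : Fin n => ((j : ℕ) : ℝ) ^ d)
          (Submodule.span ℝ (Set.range
            (fun k : Fin d => fun j : Fin n => ((j : ℕ) : ℝ) ^ (k : ℕ))))).direction = d := by
        rw [AffineSubspace.direction_mk', finrank_span_eq_card (vmon_li n d hdn),
          Fintype.card_fin]
      refine ⟨_, ⟨_, AffineSubspace.self_mem_mk' (fun j : Fin n => ((j : ℕ) : ℝ) ^ d)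
        (Submodule.span ℝ (Set.range
          (fun k : Fin d => fun j : Fin n => ((j : ℕ) : ℝ) ^ (k : ℕ))))⟩, hrank, ?_⟩
      refine le_antisymm (pat_upper n d _ (le_of_eq hrank)) ?_
      classical
      set T : Finset (Finset ℕ × Bool) :=
        (((Finset.range d).biUnion fun k => Finset.powersetCard k (Finset.range (n-1)))
          ×ˢ ({true, false} : Finset Bool)
        ∪ (Finset.powersetCard d (Finset.range (n-1))) ×ˢ ({true} : Finset Bool)) with hT
      have hmemT : ∀ q ∈ T, q.1 ⊆ Finset.range (n-1) ∧ q.1.card ≤ d ∧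
          (q.1.card = d → q.2 = true) := by
        rintro ⟨C, b⟩ hq
        rw [hT, Finset.mem_union, Finset.mem_product, Finset.mem_product] at hq
        rcases hq with ⟨h1, -⟩ | ⟨h1, h2⟩
        · obtain ⟨k, hk, hCk⟩ := Finset.mem_biUnion.mp h1
          rw [Finset.mem_powersetCard] at hCk
          rw [Finset.mem_range] at hk
          exact ⟨hCk.1, by omega, fun h => by omega⟩
        · rw [Finset.mem_powersetCard] at h1
          rw [Finset.mem_singleton] at h2
          exact ⟨h1.1, le_of_eq h1.2, fun _ => h2⟩
      have hsub : (fun q : Finset ℕ × Bool => Phi (n := n) q.1 q.2) '' ↑T ⊆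
          {σ : Fin n → Bool | ∃ x ∈ AffineSubspace.mk' (fun j : Fin n => ((j : ℕ) : ℝ) ^ d)
            (Submodule.span ℝ (Set.range
              (fun k : Fin d => fun j : Fin n => ((j : ℕ) : ℝ) ^ (k : ℕ)))),
            ∀ j, (σ j = true → 0 < x j) ∧ (σ j = false → x j < 0)} := by
        rintro σ ⟨⟨C, b⟩, hqT, rfl⟩
        obtain ⟨-, hcard, hlast⟩ := hmemT _ hqT
        obtain ⟨x, hx, hsigns⟩ := realize n d C b hcard hlast
        exact ⟨x, hx, hsigns⟩
      have hinjOn : Set.InjOn (fun q : Finset ℕ × Bool => Phi (n := n) q.1 q.2) ↑T := by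
        rintro ⟨C, b⟩ hq ⟨C', b'⟩ hq' h
        simp only at h
        have hsubC := (hmemT _ hq).1
        have hsubC' := (hmemT _ hq').1
        have hblast : ∀ (D : Finset ℕ) (c : Bool), D ⊆ Finset.range (n-1) →
            Phi (n := n) D c ⟨n-1, by omega⟩ = c := by
          intro D c hD
          unfold Phi
          rw [chg_last D hD]
          cases c <;> simp
        have hb : b = b' := by
          rw [← hblast C b hsubC, ← hblast C' b' hsubC', h]
        have hC : C = C' := by
          ext i
          constructor
          · intro hiC
            have hi : i < n - 1 := Finset.mem_range.mp (hsubC hiC)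
            have hi1 : i + 1 < n := by omega
            have hne := (Phi_change C b i hi1).mpr hiC
            rw [h] at hne
            exact (Phi_change C' b' i hi1).mp hne
          · intro hiC
            have hi : i < n - 1 := Finset.mem_range.mp (hsubC' hiC)
            have hi1 : i + 1 < n := by omega
            have hne := (Phi_change C' b' i hi1).mpr hiC
            rw [← h] at hne
            exact (Phi_change C b i hi1).mp hne
        rw [Prod.mk.injEq]
        exact ⟨hC, hb⟩
      calc ∑ i ∈ Finset.range (d + 1), n.choose i = T.card := (Tcard n d hn).symm
        _ = ((fun q : Finset ℕ × Bool => Phi (n := n) q.1 q.2) '' ↑T).ncard := by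
            rw [Set.ncard_image_of_injOn hinjOn, Set.ncard_coe_finset]
        _ ≤ _ := Set.ncard_le_ncard hsub (Set.toFinite _)
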